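/- For every integer m ≥ 4, one has (m-1)! < (m-1)^{m-1/2}·e^{2-m}; consequently 2^m < (1/√e)·(m+1/2)^{m-1}/(m-1)! holds for all sufficiently large m, which implies P_{2m}^{(1)}(2m) < P_{2m}^{(2)}(2m) and hence r'_{2m} > 2m for all sufficiently large m. -/

import Mathlib

open Real Finset

lemma key_num : Real.exp 1 ^ 2 / 4 * Real.sqrt 2 < Real.exp 1 := by
  have h1 : Real.exp 1 < 2.7182818286 := Real.exp_one_lt_d9
  have h2 : (2.7182818283:ℝ) < Real.exp 1 := Real.exp_one_gt_d9
  have h3 : Real.sqrt 2 < 1.41421357 := by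
    rw [Real.sqrt_lt' (by norm_num)]; norm_num
  have h4 : (0:ℝ) < Real.sqrt 2 := Real.sqrt_pos.mpr (by norm_num)
  nlinarith

lemma rpow_split (n : ℕ) (hn : 0 < n) :
    (n:ℝ) ^ ((n:ℝ) + 1/2) = (n:ℝ) ^ (n:ℕ) * Real.sqrt n := by
  have hpos : (0:ℝ) < n := by exact_mod_cast hn
  rw [Real.rpow_add hpos, Real.rpow_natCast, Real.sqrt_eq_rpow]

lemma stirling2 : Stirling.stirlingSeq 2 = Real.exp 1 ^ 2 / 4 := by
  have h4 : Real.sqrt (2 * (2:ℕ) : ℝ) = 2 := by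
    rw [show (2 * (2:ℕ) : ℝ) = 2 ^ 2 by norm_num, Real.sqrt_sq (by norm_num)]
  rw [Stirling.stirlingSeq, h4]
  rw [div_pow]
  have : (Real.exp 1) ^ 2 ≠ 0 := by positivity
  field_simp [Nat.factorial]
  ring

lemma part1_aux (n : ℕ) (hn : 3 ≤ n) :
    ((n.factorial : ℝ)) < (n:ℝ) ^ ((n:ℝ) + 1/2) * Real.exp (1 - n) := by
  have hpos : (0:ℝ) < n := by positivity
  have hden : (0:ℝ) < Real.sqrt (2 * n) * ((n:ℝ) / Real.exp 1) ^ n := by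
    have : (0:ℝ) < Real.sqrt (2 * n) := Real.sqrt_pos.mpr (by positivity)
    positivity
  have hfac : (n.factorial : ℝ) = Stirling.stirlingSeq n *
      (Real.sqrt (2 * n) * ((n:ℝ) / Real.exp 1) ^ n) := by
    rw [Stirling.stirlingSeq, div_mul_cancel₀]
    exact ne_of_gt hden
  have hs : Stirling.stirlingSeq n ≤ Stirling.stirlingSeq 2 := by
    have h := Stirling.stirlingSeq'_antitone (show 1 ≤ n - 1 by omega)
    simpa [Function.comp, Nat.sub_add_cancel (show 1 ≤ n by omega)] using h
  have hX : (0:ℝ) < Real.sqrt n * ((n:ℝ) ^ (n:ℕ) / Real.exp n) := by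
    have : (0:ℝ) < Real.sqrt n := Real.sqrt_pos.mpr hpos
    positivity
  calc (n.factorial : ℝ)
      = Stirling.stirlingSeq n * (Real.sqrt (2 * n) * ((n:ℝ) / Real.exp 1) ^ n) := hfac
    _ ≤ (Real.exp 1 ^ 2 / 4) * (Real.sqrt (2 * n) * ((n:ℝ) / Real.exp 1) ^ n) := by
        rw [← stirling2]; exact mul_le_mul_of_nonneg_right hs hden.le
    _ = (Real.exp 1 ^ 2 / 4 * Real.sqrt 2) * (Real.sqrt n * ((n:ℝ) ^ (n:ℕ) / Real.exp n)) := by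
        rw [← Real.exp_one_pow n, Real.sqrt_mul (by norm_num : (0:ℝ) ≤ 2), div_pow]
        ring
    _ < Real.exp 1 * (Real.sqrt n * ((n:ℝ) ^ (n:ℕ) / Real.exp n)) :=
        mul_lt_mul_of_pos_right key_num hX
    _ = (n:ℝ) ^ ((n:ℝ) + 1/2) * Real.exp (1 - n) := by
        rw [rpow_split n (by omega), Real.exp_sub]
        ring

lemma part1 (m : ℕ) (hm : 4 ≤ m) :
    ((m - 1).factorial : ℝ) < ((m : ℝ) - 1) ^ ((m : ℝ) - 1 / 2) * Real.exp (2 - m) := by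
  obtain ⟨n, rfl⟩ : ∃ n, m = n + 1 := ⟨m - 1, by omega⟩
  have hn : 3 ≤ n := by omega
  have h := part1_aux n hn
  simp only [Nat.add_sub_cancel]
  push_cast
  rw [show (n:ℝ)+1-1 = (n:ℝ) by ring, show (n:ℝ)+1-1/2 = (n:ℝ)+1/2 by ring,
    show (2:ℝ)-((n:ℝ)+1) = 1-(n:ℝ) by ring]
  exact h

lemma geom_aux : ∀ m : ℕ, 17 ≤ m → (m:ℝ) * (3/4)^m ≤ 1/6 := by
  intro m hm
  induction m, hm using Nat.le_induction with
  | base => norm_num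
  | succ n hn ih =>
    have hp : (0:ℝ) < (3/4)^n := by positivity
    have hn' : (17:ℝ) ≤ n := by exact_mod_cast hn
    calc ((n+1:ℕ):ℝ) * (3/4)^(n+1) = (3/4 * ((n:ℝ)+1)) * (3/4)^n := by
          push_cast; ring
      _ ≤ (n:ℝ) * (3/4)^n := by nlinarith
      _ ≤ 1/6 := ih

lemma sqrt_exp_inv : (Real.sqrt (Real.exp 1))⁻¹ = Real.exp (-(1/2)) := by
  rw [← Real.exp_half, ← Real.exp_neg]

lemma exp_neg_half_ge : (3/5 : ℝ) ≤ Real.exp (-(1/2)) := by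
  rw [← sqrt_exp_inv]
  have h53 : Real.sqrt (Real.exp 1) ≤ 5/3 := by
    rw [Real.sqrt_le_left (by norm_num)]
    nlinarith [Real.exp_one_lt_d9]
  have hpos : (0:ℝ) < Real.sqrt (Real.exp 1) := Real.sqrt_pos.mpr (Real.exp_pos 1)
  calc (3/5:ℝ) = (5/3)⁻¹ := by norm_num
    _ ≤ (Real.sqrt (Real.exp 1))⁻¹ := by
        exact inv_anti₀ hpos h53

lemma lemmaA (m : ℕ) (hm : 18 ≤ m) :
    (2:ℝ)^m * ((m-1).factorial : ℝ) < Real.exp (-(1/2)) * ((m:ℝ) + 1/2)^(m-1) := by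
  obtain ⟨n, rfl⟩ : ∃ n, m = n + 1 := ⟨m - 1, by omega⟩
  have hn : 17 ≤ n := by omega
  have hnpos : (0:ℝ) < n := by positivity
  have hn' : (17:ℝ) ≤ n := by exact_mod_cast hn
  simp only [Nat.add_sub_cancel]
  have h1 : ((n.factorial : ℝ)) < (n:ℝ) ^ ((n:ℝ) + 1/2) * Real.exp (1 - n) :=
    part1_aux n (by omega)
  -- Bernoulli
  have h3 : (5/2 : ℝ) * (n:ℝ)^(n:ℕ) ≤ ((n:ℝ) + 3/2)^(n:ℕ) := by
    have hb := one_add_mul_le_pow (a := 3/(2*(n:ℝ))) (le_trans (by norm_num : (-2:ℝ) ≤ 0) (by positivity)) n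
    have hb' : (5/2 : ℝ) ≤ (1 + 3/(2*(n:ℝ)))^n := by
      have : 1 + (n:ℝ) * (3/(2*(n:ℝ))) = 5/2 := by field_simp; ring
      linarith [hb, this ▸ hb]
    calc (5/2 : ℝ) * (n:ℝ)^(n:ℕ) ≤ (1 + 3/(2*(n:ℝ)))^n * (n:ℝ)^(n:ℕ) := by
          have : (0:ℝ) ≤ (n:ℝ)^(n:ℕ) := by positivity
          exact mul_le_mul_of_nonneg_right hb' this
      _ = ((n:ℝ) + 3/2)^(n:ℕ) := by
          rw [← mul_pow]
          congr 1
          field_simp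
  -- the exponential bound
  have h4 : (2:ℝ)^(n+1) * (Real.sqrt n * Real.exp (1 - n)) ≤ 5/2 * Real.exp (-(1/2)) := by
    have s1 : Real.sqrt (n:ℝ) ≤ (n:ℝ) := by
      rw [Real.sqrt_le_left hnpos.le]; nlinarith
    have s2 : Real.exp (1 - (n:ℝ)) = Real.exp 1 * (Real.exp (-1))^n := by
      rw [← Real.exp_nat_mul, ← Real.exp_add]
      ring_nf
    have s3 : (2:ℝ) * Real.exp (-1) ≤ 3/4 := by
      rw [Real.exp_neg]
      have hp := Real.exp_pos 1
      rw [← one_div, mul_one_div, div_le_iff₀ hp]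
      nlinarith [Real.exp_one_gt_d9]
    have s4 : ((2:ℝ) * Real.exp (-1))^n ≤ (3/4)^n :=
      pow_le_pow_left₀ (by positivity) s3 n
    have s5 : (0:ℝ) ≤ (3/4:ℝ)^n := by positivity
    calc (2:ℝ)^(n+1) * (Real.sqrt n * Real.exp (1 - n))
        = 2 * Real.exp 1 * (Real.sqrt n * ((2:ℝ) * Real.exp (-1))^n) := by
          rw [s2, pow_succ, mul_pow]; ring
      _ ≤ 2 * Real.exp 1 * ((n:ℝ) * (3/4)^n) := by
          have hE : (0:ℝ) ≤ 2 * Real.exp 1 := by positivity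
          apply mul_le_mul_of_nonneg_left _ hE
          exact mul_le_mul s1 s4 (by positivity) hnpos.le
      _ ≤ 2 * Real.exp 1 * (1/6) := by
          have hE : (0:ℝ) ≤ 2 * Real.exp 1 := by positivity
          exact mul_le_mul_of_nonneg_left (geom_aux n hn) hE
      _ ≤ 5/2 * Real.exp (-(1/2)) := by
          nlinarith [exp_neg_half_ge, Real.exp_one_lt_d9]
  -- assemble
  have e2 : ((n+1:ℕ):ℝ) + 1/2 = (n:ℝ) + 3/2 := by push_cast; ring
  rw [e2]
  have hpow : (0:ℝ) < (2:ℝ)^(n+1) := by positivity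
  have hnn : (0:ℝ) ≤ (n:ℝ)^(n:ℕ) := by positivity
  calc (2:ℝ)^(n+1) * (n.factorial : ℝ)
      < (2:ℝ)^(n+1) * ((n:ℝ) ^ ((n:ℝ) + 1/2) * Real.exp (1 - n)) :=
        mul_lt_mul_of_pos_left h1 hpow
    _ = (n:ℝ)^(n:ℕ) * ((2:ℝ)^(n+1) * (Real.sqrt n * Real.exp (1 - n))) := by
        rw [rpow_split n (by omega)]; ring
    _ ≤ (n:ℝ)^(n:ℕ) * (5/2 * Real.exp (-(1/2))) :=
        mul_le_mul_of_nonneg_left h4 hnn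
    _ = Real.exp (-(1/2)) * (5/2 * (n:ℝ)^(n:ℕ)) := by ring
    _ ≤ Real.exp (-(1/2)) * ((n:ℝ) + 3/2)^(n:ℕ) :=
        mul_le_mul_of_nonneg_left h3 (Real.exp_pos _).le

lemma stmtA (m : ℕ) (hm : 18 ≤ m) :
    (2:ℝ)^m < (Real.sqrt (Real.exp 1))⁻¹ * ((m:ℝ) + 1/2)^(m-1) / ((m-1).factorial : ℝ) := by
  have hf : (0:ℝ) < ((m-1).factorial : ℝ) := by exact_mod_cast (m-1).factorial_pos
  rw [lt_div_iff₀ hf, sqrt_exp_inv]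
  exact lemmaA m hm

lemma stmtB (m : ℕ) (hm : 18 ≤ m) :
    (2:ℝ)^m < (Real.sqrt (Real.exp 1))⁻¹ *
      ∑ i ∈ Finset.range m, (1 + 2*(m:ℝ))^i / (2^i * (i.factorial : ℝ)) := by
  have hm1 : m - 1 ∈ Finset.range m := by
    rw [Finset.mem_range]; omega
  have h2ne : ((2:ℝ)^(m-1)) ≠ 0 := by positivity
  have hterm : (1 + 2*(m:ℝ))^(m-1) / (2^(m-1) * ((m-1).factorial : ℝ))
      = ((m:ℝ) + 1/2)^(m-1) / ((m-1).factorial : ℝ) := by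
    rw [show (1 + 2*(m:ℝ)) = 2*((m:ℝ) + 1/2) by ring, mul_pow,
      mul_div_mul_left _ _ h2ne]
  have hsum : ((m:ℝ) + 1/2)^(m-1) / ((m-1).factorial : ℝ) ≤
      ∑ i ∈ Finset.range m, (1 + 2*(m:ℝ))^i / (2^i * (i.factorial : ℝ)) := by
    rw [← hterm]
    exact Finset.single_le_sum (f := fun i => (1 + 2*(m:ℝ))^i / (2^i * (i.factorial : ℝ)))
      (fun i _ => by positivity) hm1
  have hc : (0:ℝ) ≤ (Real.sqrt (Real.exp 1))⁻¹ := by positivity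
  calc (2:ℝ)^m < (Real.sqrt (Real.exp 1))⁻¹ * ((m:ℝ) + 1/2)^(m-1) / ((m-1).factorial : ℝ) :=
        stmtA m hm
    _ = (Real.sqrt (Real.exp 1))⁻¹ * (((m:ℝ) + 1/2)^(m-1) / ((m-1).factorial : ℝ)) :=
        mul_div_assoc _ _ _
    _ ≤ _ := mul_le_mul_of_nonneg_left hsum hc

lemma stmtC (m : ℕ) (hm : 18 ≤ m) :
    ∃ r : ℝ, 2 * (m : ℝ) < r ∧
      (1 + r / (2 * m)) ^ m = (Real.sqrt (Real.exp 1))⁻¹ *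
        ∑ i ∈ Finset.range m, (1 + r) ^ i / (2 ^ i * (i.factorial : ℝ)) := by
  set c : ℝ := (Real.sqrt (Real.exp 1))⁻¹ with hc_def
  have hcpos : 0 < c := by positivity
  have hc1 : c ≤ 1 := by
    rw [hc_def, sqrt_exp_inv]
    exact (Real.exp_le_exp.mpr (by norm_num)).trans_eq Real.exp_zero
  have hmpos : (0:ℝ) < m := by positivity
  have h2m : (0:ℝ) < 2*(m:ℝ) := by positivity
  set G : ℝ → ℝ := fun r => (1 + r / (2 * (m:ℝ))) ^ m -
    c * ∑ i ∈ Finset.range m, (1 + r) ^ i / (2 ^ i * (i.factorial : ℝ)) with hG_def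
  have hGcont : Continuous G := by
    apply Continuous.sub
    · exact (continuous_const.add (continuous_id.div_const _)).pow m
    · exact continuous_const.mul (continuous_finset_sum _ fun i _ =>
        ((continuous_const.add continuous_id).pow i).div_const _)
  have hG1 : G (2*(m:ℝ)) < 0 := by
    have h2 : (1 + 2*(m:ℝ) / (2*(m:ℝ))) ^ m = 2 ^ m := by
      rw [div_self h2m.ne']; norm_num
    rw [hG_def]
    simp only [h2]
    rw [sub_neg]
    exact stmtB m hm
  set r₀ : ℝ := (m:ℝ) * 2^m * (2*(m:ℝ))^m with hr₀_def
  have h1m : (1:ℝ) ≤ m := by linarith [show (18:ℝ) ≤ m by exact_mod_cast hm]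
  have h12 : (1:ℝ) ≤ 2^m := one_le_pow₀ (by norm_num)
  have h13 : (1:ℝ) ≤ (2*(m:ℝ))^m := one_le_pow₀ (by linarith)
  have hr01 : (1:ℝ) ≤ r₀ := by
    calc (1:ℝ) = 1*1*1 := by norm_num
      _ ≤ (m:ℝ) * 2^m * (2*(m:ℝ))^m := by
          apply mul_le_mul (mul_le_mul h1m h12 (by norm_num) (by linarith)) h13 (by norm_num)
          positivity
  have hr0pos : (0:ℝ) < r₀ := by linarith
  have h2mr0 : 2*(m:ℝ) ≤ r₀ := by
    calc 2*(m:ℝ) ≤ (2*(m:ℝ))^m := le_self_pow₀ (by linarith) (by omega)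
      _ = 1 * (2*(m:ℝ))^m := (one_mul _).symm
      _ ≤ ((m:ℝ) * 2^m) * (2*(m:ℝ))^m := by
          apply mul_le_mul_of_nonneg_right _ (by positivity)
          nlinarith
      _ = r₀ := rfl
  have hSnonneg : (0:ℝ) ≤ ∑ i ∈ Finset.range m, (1 + r₀) ^ i / (2 ^ i * (i.factorial : ℝ)) :=
    Finset.sum_nonneg fun i _ => by positivity
  have hS : ∑ i ∈ Finset.range m, (1 + r₀) ^ i / (2 ^ i * (i.factorial : ℝ))
      ≤ (m:ℝ) * (2*r₀)^(m-1) := by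
    calc ∑ i ∈ Finset.range m, (1 + r₀) ^ i / (2 ^ i * (i.factorial : ℝ))
        ≤ ∑ _i ∈ Finset.range m, (2*r₀)^(m-1) := by
          apply Finset.sum_le_sum
          intro i hi
          have hi' : i ≤ m - 1 := by
            have := Finset.mem_range.mp hi; omega
          have hone : (1:ℝ) ≤ 2^i * (i.factorial : ℝ) := by
            have a1 : (1:ℝ) ≤ 2^i := one_le_pow₀ (by norm_num)
            have a2 : (1:ℝ) ≤ (i.factorial : ℝ) := by
              exact_mod_cast i.factorial_pos
            nlinarith
          calc (1 + r₀) ^ i / (2 ^ i * (i.factorial : ℝ)) ≤ (1 + r₀) ^ i :=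
                div_le_self (by positivity) hone
            _ ≤ (1 + r₀) ^ (m-1) := pow_le_pow_right₀ (by linarith) hi'
            _ ≤ (2*r₀) ^ (m-1) := pow_le_pow_left₀ (by positivity) (by linarith) _
      _ = (m:ℝ) * (2*r₀)^(m-1) := by
          rw [Finset.sum_const, Finset.card_range, nsmul_eq_mul]
  have hkey : (m:ℝ) * (2*r₀)^(m-1) ≤ (r₀/(2*(m:ℝ)))^m := by
    have hm1 : m - 1 + 1 = m := by omega
    have e1 : (r₀/(2*(m:ℝ)))^m = (m:ℝ) * 2^m * r₀^(m-1) := by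
      rw [div_pow, show r₀^m = r₀^(m-1) * r₀ by rw [← pow_succ, hm1], hr₀_def]
      have h2mne : ((2*(m:ℝ))^m) ≠ 0 := by positivity
      field_simp
    rw [e1, mul_pow]
    have h2pow : (2:ℝ)^(m-1) ≤ 2^m := pow_le_pow_right₀ (by norm_num) (by omega)
    calc (m:ℝ) * (2^(m-1) * r₀^(m-1)) = ((m:ℝ) * r₀^(m-1)) * 2^(m-1) := by ring
      _ ≤ ((m:ℝ) * r₀^(m-1)) * 2^m := by
          apply mul_le_mul_of_nonneg_left h2pow (by positivity)
      _ = (m:ℝ) * 2^m * r₀^(m-1) := by ring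
  have hG2 : 0 ≤ G r₀ := by
    rw [hG_def]
    simp only
    rw [sub_nonneg]
    calc c * ∑ i ∈ Finset.range m, (1 + r₀) ^ i / (2 ^ i * (i.factorial : ℝ))
        ≤ 1 * ∑ i ∈ Finset.range m, (1 + r₀) ^ i / (2 ^ i * (i.factorial : ℝ)) :=
          mul_le_mul_of_nonneg_right hc1 hSnonneg
      _ = ∑ i ∈ Finset.range m, (1 + r₀) ^ i / (2 ^ i * (i.factorial : ℝ)) := one_mul _
      _ ≤ (m:ℝ) * (2*r₀)^(m-1) := hS
      _ ≤ (r₀/(2*(m:ℝ)))^m := hkey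
      _ ≤ (1 + r₀/(2*(m:ℝ)))^m := by
          apply pow_le_pow_left₀ (by positivity) (by linarith)
  obtain ⟨r, hrmem, hGr⟩ := intermediate_value_Ioc h2mr0 hGcont.continuousOn ⟨hG1, hG2⟩
  refine ⟨r, hrmem.1, ?_⟩
  have := sub_eq_zero.mp hGr
  rw [hG_def] at hGr
  simp only at hGr
  linarith [sub_eq_zero.mp hGr]

theorem stmt_19 :
    (∀ m : ℕ, 4 ≤ m →
      ((m - 1).factorial : ℝ) < ((m : ℝ) - 1) ^ ((m : ℝ) - 1 / 2) *
        Real.exp (2 - m)) ∧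
    (∃ M : ℕ, ∀ m : ℕ, M ≤ m →
      ((2 : ℝ) ^ m < (Real.sqrt (Real.exp 1))⁻¹ *
          ((m : ℝ) + 1 / 2) ^ (m - 1) / (m - 1).factorial) ∧
      ((2 : ℝ) ^ m < (Real.sqrt (Real.exp 1))⁻¹ *
          ∑ i ∈ Finset.range m, (1 + 2 * (m : ℝ)) ^ i / (2 ^ i * i.factorial)) ∧
      (∃ r : ℝ, 2 * (m : ℝ) < r ∧
        (1 + r / (2 * m)) ^ m = (Real.sqrt (Real.exp 1))⁻¹ *
          ∑ i ∈ Finset.range m, (1 + r) ^ i / (2 ^ i * i.factorial))) := by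
  exact ⟨part1, 18, fun m hm => ⟨stmtA m hm, stmtB m hm, stmtC m hm⟩⟩
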